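/- Let f : D_f → {0,1} and g : D_g → {0,1} be partial Boolean functions, and let COR(f,g) be the partial function taking input (x,y) with x ∈ D_f, y ∈ D_g under the promise f(x) = g(y), outputting this common value. Then the p-parallel deterministic query complexity of COR(f,g) equals min(D^{p∥}(f), D^{p∥}(g)) up to a constant factor: D^{p∥}(COR(f,g)) ≤ 2·min(D^{p∥}(f), D^{p∥}(g)) and D^{p∥}(COR(f,g)) ≥ min(D^{p∥}(f), D^{p∥}(g)). -/
import Mathlib


/-- A (parallel) query algorithm: given the history of query-answer pairs so far,
it names the set of positions to query in the next round, and can output a bit. -/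
structure QAlg (ι α : Type*) where
  query : List (ι × α) → Finset ι
  out : List (ι × α) → Bool

namespace QAlg

variable {ι α : Type*}

/-- The history of query-answer pairs after `t` rounds on input `x`. -/
noncomputable def hist (A : QAlg ι α) (x : ι → α) : ℕ → List (ι × α)
  | 0 => []
  | t + 1 => hist A x t ++ ((A.query (hist A x t)).toList.map fun i => (i, x i))

/-- The algorithm queries at most `p` positions per round. -/
def Parallel (A : QAlg ι α) (p : ℕ) : Prop := ∀ h, (A.query h).card ≤ p

/-- The algorithm computes `F` on every input in `dom` after `t` rounds. -/
def Computes (A : QAlg ι α) (dom : Set (ι → α)) (F : (ι → α) → Bool) (t : ℕ) : Prop :=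
  ∀ x ∈ dom, A.out (A.hist x t) = F x

end QAlg

/-- `Dpar p dom F` : the `p`-parallel deterministic query complexity of the
(partial) function `F` with domain `dom`, i.e. the least number of rounds of
`p` non-adaptive queries needed to compute `F` on all of `dom`. -/
noncomputable def Dpar {ι α : Type*} (p : ℕ) (dom : Set (ι → α)) (F : (ι → α) → Bool) : ℕ :=
  sInf {t | ∃ A : QAlg ι α, A.Parallel p ∧ A.Computes dom F t}

/-- The promise problem `COR(f,g)`: given oracle access to `x ∈ D_f` and `y ∈ D_g`
with the promise `f x = g y`, output the common value.  Its domain: -/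
def corDom {Nf Ng : ℕ} (Df : Set (Fin Nf → Bool)) (Dg : Set (Fin Ng → Bool))
    (f : (Fin Nf → Bool) → Bool) (g : (Fin Ng → Bool) → Bool) :
    Set ((Fin Nf ⊕ Fin Ng) → Bool) :=
  {z | (z ∘ Sum.inl) ∈ Df ∧ (z ∘ Sum.inr) ∈ Dg ∧ f (z ∘ Sum.inl) = g (z ∘ Sum.inr)}

/-- The value of `COR(f,g)` on an input satisfying the promise. -/
def corFun {Nf Ng : ℕ} (f : (Fin Nf → Bool) → Bool) :
    ((Fin Nf ⊕ Fin Ng) → Bool) → Bool :=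
  fun z => f (z ∘ Sum.inl)

section CorAux

open QAlg

variable {ι : Type*} {p : ℕ}

/-- `F` is nonconstant on `C`. -/
def NCaux (F : (ι → Bool) → Bool) (C : Set (ι → Bool)) : Prop :=
  ∃ x ∈ C, ∃ x' ∈ C, F x ≠ F x'

/-- Restriction of a set of inputs by fixing values on `S` according to `σ`. -/
def resAux (C : Set (ι → Bool)) (S : Finset ι) (σ : ι → Bool) : Set (ι → Bool) :=
  {x ∈ C | ∀ i ∈ S, x i = σ i}

lemma resAux_subset {C : Set (ι → Bool)} {S : Finset ι} {σ : ι → Bool} :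
    resAux C S σ ⊆ C := fun _ hx => hx.1

lemma resAux_empty {C : Set (ι → Bool)} {σ : ι → Bool} : resAux C (∅ : Finset ι) σ = C := by
  ext x; simp [resAux]

/-- The adversary can survive `t` rounds of `p` parallel queries keeping `F` nonconstant. -/
def HardAux (p : ℕ) (F : (ι → Bool) → Bool) : ℕ → Set (ι → Bool) → Prop
  | 0, C => NCaux F C
  | t+1, C => ∀ S : Finset ι, S.card ≤ p → ∃ σ, HardAux p F t (resAux C S σ)

lemma hardAux_mono {F : (ι → Bool) → Bool} :
    ∀ {t : ℕ} {C C' : Set (ι → Bool)}, C ⊆ C' → HardAux p F t C → HardAux p F t C' := by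
  intro t
  induction t with
  | zero =>
      rintro C C' hsub ⟨x, hx, x', hx', hne⟩
      exact ⟨x, hsub hx, x', hsub hx', hne⟩
  | succ t ih =>
      intro C C' hsub H S hS
      obtain ⟨σ, hσ⟩ := H S hS
      exact ⟨σ, ih (fun x hx => ⟨hsub hx.1, hx.2⟩) hσ⟩

/-- Running an algorithm for `t` more rounds starting from history `h`. -/
noncomputable def extAux (A : QAlg ι Bool) (x : ι → Bool) : ℕ → List (ι × Bool) → List (ι × Bool)
  | 0, h => h
  | t+1, h => extAux A x t (h ++ (A.query h).toList.map fun i => (i, x i))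

lemma extAux_succ (A : QAlg ι Bool) (x : ι → Bool) :
    ∀ (t : ℕ) (h : List (ι × Bool)), extAux A x (t+1) h =
      extAux A x t h ++ ((A.query (extAux A x t h)).toList.map fun i => (i, x i)) := by
  intro t
  induction t with
  | zero => intro h; simp [extAux]
  | succ t ih =>
      intro h
      show extAux A x (t+1) (h ++ _) = _
      rw [ih]
      rfl

lemma hist_eq_extAux (A : QAlg ι Bool) (x : ι → Bool) :
    ∀ t : ℕ, A.hist x t = extAux A x t [] := by
  intro t
  induction t with
  | zero => rfl
  | succ t ih => rw [QAlg.hist, ih, extAux_succ]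

/-- From a surviving adversary: two inputs with different `F`-values and the same transcript. -/
lemma hard_pairs {F : (ι → Bool) → Bool} (A : QAlg ι Bool) (hpar : A.Parallel p) :
    ∀ (t : ℕ) (C : Set (ι → Bool)) (h : List (ι × Bool)), HardAux p F t C →
      ∃ x ∈ C, ∃ x' ∈ C, F x ≠ F x' ∧ extAux A x t h = extAux A x' t h := by
  intro t
  induction t with
  | zero =>
      rintro C h ⟨x, hx, x', hx', hne⟩
      exact ⟨x, hx, x', hx', hne, rfl⟩
  | succ t ih =>
      intro C h hC
      obtain ⟨σ, hσ⟩ := hC (A.query h) (hpar h)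
      obtain ⟨x, hx, x', hx', hne, hext⟩ :=
        ih _ (h ++ (A.query h).toList.map fun i => (i, σ i)) hσ
      refine ⟨x, hx.1, x', hx'.1, hne, ?_⟩
      have e1 : (A.query h).toList.map (fun i => (i, x i)) =
          (A.query h).toList.map (fun i => (i, σ i)) :=
        List.map_congr_left fun i hi => by rw [hx.2 i (Finset.mem_toList.mp hi)]
      have e2 : (A.query h).toList.map (fun i => (i, x' i)) =
          (A.query h).toList.map (fun i => (i, σ i)) :=
        List.map_congr_left fun i hi => by rw [hx'.2 i (Finset.mem_toList.mp hi)]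
      show extAux A x t _ = extAux A x' t _
      rw [e1, e2]
      exact hext

lemma not_hard_of_computes {F : (ι → Bool) → Bool} {C : Set (ι → Bool)} {t : ℕ}
    (A : QAlg ι Bool) (hpar : A.Parallel p) (hcomp : A.Computes C F t) :
    ¬ HardAux p F t C := by
  intro H
  obtain ⟨x, hx, x', hx', hne, hext⟩ := hard_pairs A hpar t C [] H
  apply hne
  rw [← hcomp x hx, ← hcomp x' hx', hist_eq_extAux, hist_eq_extAux, hext]

lemma computes_const {F : (ι → Bool) → Bool} {C : Set (ι → Bool)} {t : ℕ}
    (hconst : ∀ x ∈ C, ∀ x' ∈ C, F x = F x') :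
    ∃ A : QAlg ι Bool, A.Parallel p ∧ A.Computes C F t := by
  classical
  refine ⟨⟨fun _ => ∅, fun _ => if h : C.Nonempty then F h.choose else false⟩,
    fun h => by simp, ?_⟩
  intro x hx
  have hne : C.Nonempty := ⟨x, hx⟩
  show (if h : C.Nonempty then F h.choose else false) = F x
  rw [dif_pos hne]
  exact hconst _ hne.choose_spec _ hx

end CorAux

section CorAux2

open QAlg

variable {ι : Type*} {p : ℕ}

lemma exists_alg_of_not_hard [Nonempty ι] (hp : 1 ≤ p) (F : (ι → Bool) → Bool) :
    ∀ (t : ℕ) (C : Set (ι → Bool)), ¬ HardAux p F t C →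
      ∃ A : QAlg ι Bool, A.Parallel p ∧ A.Computes C F t := by
  intro t
  induction t with
  | zero =>
      intro C hC
      apply computes_const
      intro x hx x' hx'
      by_contra hne
      exact hC ⟨x, hx, x', hx', hne⟩
  | succ t ih =>
      intro C hC
      classical
      simp only [HardAux] at hC
      push_neg at hC
      obtain ⟨S0, hS0card, hS0⟩ := hC
      obtain ⟨S, hScard, hSne, hS⟩ : ∃ S : Finset ι, S.card ≤ p ∧ S.Nonempty ∧
          ∀ σ, ¬ HardAux p F t (resAux C S σ) := by
        rcases S0.eq_empty_or_nonempty with h0 | h0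
        · subst h0
          have hC' : ¬ HardAux p F t C := by
            have := hS0 (fun _ => false)
            rwa [resAux_empty] at this
          exact ⟨{Classical.arbitrary ι}, by simpa using hp, Finset.singleton_nonempty _,
            fun σ hσ => hC' (hardAux_mono resAux_subset hσ)⟩
        · exact ⟨S0, hS0card, h0, hS0⟩
      choose Aσ hApar hAcomp using fun σ => ih _ (hS σ)
      set k := S.card with hk
      have hk1 : 0 < k := Finset.card_pos.mpr hSne
      set σof : List (ι × Bool) → ι → Bool :=
        fun h i => if (i, true) ∈ h then true else false with hσof
      set A : QAlg ι Bool :=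
        ⟨fun h => if h.length < k then S else (Aσ (σof (h.take k))).query (h.drop k),
         fun h => if h.length < k then false else (Aσ (σof (h.take k))).out (h.drop k)⟩ with hA
      refine ⟨A, ?_, ?_⟩
      · intro h
        show (if h.length < k then S else _).card ≤ p
        split
        · exact hScard
        · exact hApar _ _
      · intro x hx
        set h1 := S.toList.map (fun i => (i, x i)) with hh1
        have hlen1 : h1.length = k := by simp [hh1, hk]
        set σ := σof h1 with hσd
        have hσx : ∀ i ∈ S, x i = σ i := by
          intro i hi
          have hmem : ((i, true) ∈ h1) ↔ x i = true := by
            simp only [hh1, List.mem_map, Finset.mem_toList, Prod.mk.injEq]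
            constructor
            · rintro ⟨a, _, rfl, ha⟩; exact ha
            · intro h; exact ⟨i, hi, rfl, h⟩
          cases hxi : x i with
          | false =>
              have : ¬ ((i, true) ∈ h1) := by rw [hmem, hxi]; simp
              simp [hσd, hσof, this]
          | true =>
              have : (i, true) ∈ h1 := hmem.mpr hxi
              simp [hσd, hσof, this]
        have hxres : x ∈ resAux C S σ := ⟨hx, hσx⟩
        have hq0 : A.query [] = S := by
          show (if ([] : List (ι × Bool)).length < k then S else _) = S
          rw [if_pos (by simpa using hk1)]
        have key : ∀ s : ℕ, A.hist x (s + 1) = h1 ++ (Aσ σ).hist x s := by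
          intro s
          induction s with
          | zero =>
              show A.hist x 0 ++ _ = _
              rw [show A.hist x 0 = [] from rfl, hq0]
              simp [hh1, QAlg.hist]
          | succ s ihs =>
              show A.hist x (s+1) ++ _ = _
              rw [ihs]
              have hql : A.query (h1 ++ (Aσ σ).hist x s) = (Aσ σ).query ((Aσ σ).hist x s) := by
                show (if (h1 ++ (Aσ σ).hist x s).length < k then S else _) = _
                rw [if_neg (by simp [hlen1])]
                rw [List.take_left' hlen1, List.drop_left' hlen1]
              rw [hql, List.append_assoc]
              rfl
        show A.out (A.hist x (t+1)) = F x
        rw [key t]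
        have hlen : ¬ ((h1 ++ (Aσ σ).hist x t).length < k) := by simp [hlen1]
        show (if (h1 ++ (Aσ σ).hist x t).length < k then false
          else (Aσ (σof ((h1 ++ (Aσ σ).hist x t).take k))).out ((h1 ++ (Aσ σ).hist x t).drop k)) = F x
        rw [if_neg hlen, List.take_left' hlen1, List.drop_left' hlen1]
        exact hAcomp σ x hxres

end CorAux2

section CorAux3

open QAlg

variable {ι : Type*} {p : ℕ}

lemma hard_agree (hp : 1 ≤ p) {F : (ι → Bool) → Bool} :
    ∀ (t : ℕ) (C : Set (ι → Bool)), HardAux p F t C → ∀ l : List ι, l.length ≤ t →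
      ∃ x ∈ C, ∃ x' ∈ C, F x ≠ F x' ∧ ∀ i ∈ l, x i = x' i := by
  intro t
  induction t with
  | zero =>
      rintro C ⟨x, hx, x', hx', hne⟩ l hl
      rw [Nat.le_zero, List.length_eq_zero_iff] at hl
      subst hl
      exact ⟨x, hx, x', hx', hne, by simp⟩
  | succ t ih =>
      intro C H l hl
      cases l with
      | nil =>
          obtain ⟨σ, hσ⟩ := H ∅ (by simp)
          rw [resAux_empty] at hσ
          obtain ⟨x, hx, x', hx', hne, _⟩ := ih C hσ [] (by simp)
          exact ⟨x, hx, x', hx', hne, by simp⟩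
      | cons i l' =>
          obtain ⟨σ, hσ⟩ := H {i} (by simpa using hp)
          obtain ⟨x, hx, x', hx', hne, hagr⟩ := ih _ hσ l' (by simpa using hl)
          refine ⟨x, hx.1, x', hx'.1, hne, ?_⟩
          intro j hj
          rcases List.mem_cons.mp hj with rfl | hj'
          · rw [hx.2 j (Finset.mem_singleton_self j), hx'.2 j (Finset.mem_singleton_self j)]
          · exact hagr j hj'

lemma not_hard_all [Fintype ι] (hp : 1 ≤ p) {F : (ι → Bool) → Bool}
    {C : Set (ι → Bool)} {t : ℕ} (ht : Fintype.card ι ≤ t) : ¬ HardAux p F t C := by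
  intro H
  obtain ⟨x, _, x', _, hne, hagr⟩ := hard_agree hp t C H Finset.univ.toList
    (by simpa [Finset.length_toList] using ht)
  apply hne
  congr 1
  exact funext fun i => hagr i (by simp [Finset.mem_toList])

lemma alg_of_not_hard [Fintype ι] (hp : 1 ≤ p) {F : (ι → Bool) → Bool}
    {C : Set (ι → Bool)} {t : ℕ} (h : ¬ HardAux p F t C) :
    ∃ A : QAlg ι Bool, A.Parallel p ∧ A.Computes C F t := by
  cases isEmpty_or_nonempty ι with
  | inl he =>
      exact computes_const fun x _ x' _ => by
        congr 1; exact funext fun i => isEmptyElim i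
  | inr hne => exact exists_alg_of_not_hard hp F t C h

lemma algset_nonempty [Fintype ι] (hp : 1 ≤ p) (F : (ι → Bool) → Bool) (C : Set (ι → Bool)) :
    ∃ A : QAlg ι Bool, A.Parallel p ∧ A.Computes C F (Fintype.card ι) :=
  alg_of_not_hard hp (not_hard_all hp le_rfl)

lemma hist_parallel_zero (A : QAlg ι Bool) (hpar : A.Parallel 0) (x : ι → Bool) :
    ∀ t : ℕ, A.hist x t = [] := by
  intro t
  induction t with
  | zero => rfl
  | succ t ih =>
      rw [QAlg.hist, ih]
      have : A.query [] = ∅ := Finset.card_eq_zero.mp (Nat.le_zero.mp (hpar []))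
      simp [this]

lemma dpar_zero (dom : Set (ι → Bool)) (F : (ι → Bool) → Bool) : Dpar 0 dom F = 0 := by
  by_cases hs : {t | ∃ A : QAlg ι Bool, A.Parallel 0 ∧ A.Computes dom F t}.Nonempty
  · obtain ⟨t, A, hpar, hcomp⟩ := hs
    refine Nat.sInf_eq_zero.mpr (Or.inl ⟨A, hpar, ?_⟩)
    intro x hx
    rw [hist_parallel_zero A hpar x 0, ← hist_parallel_zero A hpar x t]
    exact hcomp x hx
  · rw [Set.not_nonempty_iff_eq_empty] at hs
    rw [Dpar, hs, Nat.sInf_empty]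

lemma hard_projL {κ κ' : Type*} {F : (κ → Bool) → Bool} :
    ∀ (t : ℕ) (C : Set ((κ ⊕ κ') → Bool)),
      HardAux p (fun z => F (z ∘ Sum.inl)) t C →
      HardAux p F t ((fun z => z ∘ Sum.inl) '' C) := by
  intro t
  induction t with
  | zero =>
      rintro C ⟨z, hz, z', hz', hne⟩
      exact ⟨z ∘ Sum.inl, ⟨z, hz, rfl⟩, z' ∘ Sum.inl, ⟨z', hz', rfl⟩, hne⟩
  | succ t ih =>
      intro C H Sf hSf
      obtain ⟨σ, hσ⟩ := H (Sf.map ⟨Sum.inl, Sum.inl_injective⟩) (by simpa using hSf)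
      refine ⟨σ ∘ Sum.inl, hardAux_mono ?_ (ih _ hσ)⟩
      rintro x ⟨z, hz, rfl⟩
      exact ⟨⟨z, hz.1, rfl⟩, fun i hi => hz.2 (Sum.inl i) (Finset.mem_map_of_mem _ hi)⟩

lemma hard_projR {Nf Ng : ℕ} {Df : Set (Fin Nf → Bool)} {Dg : Set (Fin Ng → Bool)}
    {f : (Fin Nf → Bool) → Bool} {g : (Fin Ng → Bool) → Bool} :
    ∀ (t : ℕ) (C : Set ((Fin Nf ⊕ Fin Ng) → Bool)), C ⊆ corDom Df Dg f g →
      HardAux p (corFun f) t C →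
      HardAux p g t ((fun z => z ∘ Sum.inr) '' C) := by
  intro t
  induction t with
  | zero =>
      rintro C hsub ⟨z, hz, z', hz', hne⟩
      refine ⟨z ∘ Sum.inr, ⟨z, hz, rfl⟩, z' ∘ Sum.inr, ⟨z', hz', rfl⟩, ?_⟩
      rw [← (hsub hz).2.2, ← (hsub hz').2.2]
      exact hne
  | succ t ih =>
      intro C hsub H Sg hSg
      obtain ⟨σ, hσ⟩ := H (Sg.map ⟨Sum.inr, Sum.inr_injective⟩) (by simpa using hSg)
      refine ⟨σ ∘ Sum.inr, hardAux_mono ?_ (ih _ (Set.Subset.trans resAux_subset hsub) hσ)⟩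
      rintro y ⟨z, hz, rfl⟩
      exact ⟨⟨z, hz.1, rfl⟩, fun i hi => hz.2 (Sum.inr i) (Finset.mem_map_of_mem _ hi)⟩

end CorAux3

section CorAux4

open QAlg

variable {κ κ' : Type*} {p : ℕ}

lemma comb_adversary (B : QAlg (κ ⊕ κ') Bool) (hpar : B.Parallel p)
    {f : (κ → Bool) → Bool} {g : (κ' → Bool) → Bool} :
    ∀ (t : ℕ) (Cf : Set (κ → Bool)) (Cg : Set (κ' → Bool)) (h : List ((κ ⊕ κ') × Bool)),
      HardAux p f t Cf → HardAux p g t Cg →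
      ∃ (Cf' : Set (κ → Bool)) (Cg' : Set (κ' → Bool)), Cf' ⊆ Cf ∧ Cg' ⊆ Cg ∧
        (∃ x ∈ Cf', ∃ x' ∈ Cf', f x ≠ f x') ∧ (∃ y ∈ Cg', ∃ y' ∈ Cg', g y ≠ g y') ∧
        ∀ x ∈ Cf', ∀ y ∈ Cg', ∀ x' ∈ Cf', ∀ y' ∈ Cg',
          extAux B (Sum.elim x y) t h = extAux B (Sum.elim x' y') t h := by
  intro t
  induction t with
  | zero =>
      intro Cf Cg h Hf Hg
      exact ⟨Cf, Cg, le_refl _, le_refl _, Hf, Hg,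
        fun _ _ _ _ _ _ _ _ => rfl⟩
  | succ t ih =>
      intro Cf Cg h Hf Hg
      classical
      set S := B.query h with hSdef
      set Sf : Finset κ := S.preimage Sum.inl (Sum.inl_injective.injOn) with hSf
      set Sg : Finset κ' := S.preimage Sum.inr (Sum.inr_injective.injOn) with hSg
      have hSfcard : Sf.card ≤ p :=
        le_trans (Finset.card_le_card_of_injOn Sum.inl
          (fun a ha => Finset.mem_preimage.mp ha) (Sum.inl_injective.injOn)) (hpar h)
      have hSgcard : Sg.card ≤ p :=
        le_trans (Finset.card_le_card_of_injOn Sum.inr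
          (fun a ha => Finset.mem_preimage.mp ha) (Sum.inr_injective.injOn)) (hpar h)
      obtain ⟨σf, hσf⟩ := Hf Sf hSfcard
      obtain ⟨σg, hσg⟩ := Hg Sg hSgcard
      set w : (κ ⊕ κ') → Bool := Sum.elim σf σg with hw
      set h' := h ++ S.toList.map (fun i => (i, w i)) with hh'
      obtain ⟨Cf', Cg', hsubf, hsubg, hncf, hncg, hext⟩ := ih _ _ h' hσf hσg
      refine ⟨Cf', Cg', Set.Subset.trans hsubf resAux_subset,
        Set.Subset.trans hsubg resAux_subset, hncf, hncg, ?_⟩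
      have hagree : ∀ x ∈ resAux Cf Sf σf, ∀ y ∈ resAux Cg Sg σg,
          extAux B (Sum.elim x y) (t+1) h = extAux B (Sum.elim x y) t h' := by
        intro x hx y hy
        show extAux B (Sum.elim x y) t (h ++ (B.query h).toList.map _) = _
        congr 1
        rw [hh']
        congr 1
        apply List.map_congr_left
        intro i hi
        have hiS : i ∈ S := Finset.mem_toList.mp hi
        cases i with
        | inl a =>
            have : a ∈ Sf := Finset.mem_preimage.mpr hiS
            simp only [Sum.elim_inl, hw]
            rw [hx.2 a this]
        | inr b =>
            have : b ∈ Sg := Finset.mem_preimage.mpr hiS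
            simp only [Sum.elim_inr, hw]
            rw [hy.2 b this]
      intro x hx y hy x' hx' y' hy'
      rw [hagree x (hsubf hx) y (hsubg hy), hagree x' (hsubf hx') y' (hsubg hy')]
      exact hext x hx y hy x' hx' y' hy'

lemma bool_pair {α : Type*} {P : α → Prop} {F : α → Bool} {x x' : α}
    (hx : P x) (hx' : P x') (hne : F x ≠ F x') :
    ∃ a, P a ∧ F a = false ∧ ∃ b, P b ∧ F b = true := by
  cases h1 : F x <;> cases h2 : F x' <;> rw [h1, h2] at hne <;> try simp at hne
  · exact ⟨x, hx, h1, x', hx', h2⟩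
  · exact ⟨x', hx', h2, x, hx, h1⟩

lemma cor_lower_core {Nf Ng : ℕ} {Df : Set (Fin Nf → Bool)} {Dg : Set (Fin Ng → Bool)}
    {f : (Fin Nf → Bool) → Bool} {g : (Fin Ng → Bool) → Bool} {t : ℕ}
    (B : QAlg (Fin Nf ⊕ Fin Ng) Bool) (hpar : B.Parallel p)
    (hcomp : B.Computes (corDom Df Dg f g) (corFun f) t) :
    ¬ HardAux p f t Df ∨ ¬ HardAux p g t Dg := by
  by_contra hcon
  push_neg at hcon
  obtain ⟨Hf, Hg⟩ := hcon
  
  obtain ⟨Cf', Cg', hsubf, hsubg, ⟨x, hx, x', hx', hfx⟩, ⟨y, hy, y', hy', hgy⟩, hext⟩ :=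
    comb_adversary B hpar t Df Dg [] Hf Hg
  obtain ⟨x0, hx0, hx0f, x1, hx1, hx1f⟩ := bool_pair hx hx' hfx
  obtain ⟨y0, hy0, hy0g, y1, hy1, hy1g⟩ := bool_pair hy hy' hgy
  have hz0 : Sum.elim x0 y0 ∈ corDom Df Dg f g := by
    refine ⟨?_, ?_, ?_⟩
    · rw [Sum.elim_comp_inl]; exact hsubf hx0
    · rw [Sum.elim_comp_inr]; exact hsubg hy0
    · rw [Sum.elim_comp_inl, Sum.elim_comp_inr, hx0f, hy0g]
  have hz1 : Sum.elim x1 y1 ∈ corDom Df Dg f g := by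
    refine ⟨?_, ?_, ?_⟩
    · rw [Sum.elim_comp_inl]; exact hsubf hx1
    · rw [Sum.elim_comp_inr]; exact hsubg hy1
    · rw [Sum.elim_comp_inl, Sum.elim_comp_inr, hx1f, hy1g]
  have h0 : B.out (B.hist (Sum.elim x0 y0) t) = corFun f (Sum.elim x0 y0) := hcomp _ hz0
  have h1 : B.out (B.hist (Sum.elim x1 y1) t) = corFun f (Sum.elim x1 y1) := hcomp _ hz1
  have heq : B.hist (Sum.elim x0 y0) t = B.hist (Sum.elim x1 y1) t := by
    rw [hist_eq_extAux, hist_eq_extAux]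
    exact hext x0 hx0 y0 hy0 x1 hx1 y1 hy1
  rw [heq, h1] at h0
  have : corFun f (Sum.elim x0 y0) = false := by
    show f (Sum.elim x0 y0 ∘ Sum.inl) = false
    rw [Sum.elim_comp_inl]; exact hx0f
  have h1' : corFun f (Sum.elim x1 y1) = true := by
    show f (Sum.elim x1 y1 ∘ Sum.inl) = true
    rw [Sum.elim_comp_inl]; exact hx1f
  rw [this, h1'] at h0
  exact Bool.noConfusion h0

end CorAux4

/-- `D^{p∥}(COR(f,g))` equals `min(D^{p∥}(f), D^{p∥}(g))` up to a
factor `2`: it is at most `2·min(D^{p∥}(f), D^{p∥}(g))` and at least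
`min(D^{p∥}(f), D^{p∥}(g))`. -/
theorem cor_det_parallel (Nf Ng p : ℕ)
    (Df : Set (Fin Nf → Bool)) (Dg : Set (Fin Ng → Bool))
    (f : (Fin Nf → Bool) → Bool) (g : (Fin Ng → Bool) → Bool) :
    Dpar p (corDom Df Dg f g) (corFun f) ≤ 2 * min (Dpar p Df f) (Dpar p Dg g) ∧
      min (Dpar p Df f) (Dpar p Dg g) ≤ Dpar p (corDom Df Dg f g) (corFun f) := by
  rcases Nat.eq_zero_or_pos p with hp | hp1
  · subst hp
    rw [dpar_zero, dpar_zero, dpar_zero]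
    simp
  · have hfne : {t | ∃ A : QAlg (Fin Nf) Bool, A.Parallel p ∧ A.Computes Df f t}.Nonempty :=
      ⟨Fintype.card (Fin Nf), algset_nonempty hp1 f Df⟩
    have hgne : {t | ∃ A : QAlg (Fin Ng) Bool, A.Parallel p ∧ A.Computes Dg g t}.Nonempty :=
      ⟨Fintype.card (Fin Ng), algset_nonempty hp1 g Dg⟩
    have hcne : {t | ∃ A : QAlg (Fin Nf ⊕ Fin Ng) Bool, A.Parallel p ∧
        A.Computes (corDom Df Dg f g) (corFun f) t}.Nonempty :=
      ⟨Fintype.card (Fin Nf ⊕ Fin Ng), algset_nonempty hp1 (corFun f) (corDom Df Dg f g)⟩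
    constructor
    · -- upper bound
      rcases le_total (Dpar p Df f) (Dpar p Dg g) with hle | hle
      · rw [min_eq_left hle]
        obtain ⟨A, hApar, hAcomp⟩ := Nat.sInf_mem hfne
        have hnh : ¬ HardAux p (corFun f) (Dpar p Df f) (corDom Df Dg f g) := by
          intro H
          have H2 : HardAux p f (Dpar p Df f) ((fun z => z ∘ Sum.inl) '' (corDom Df Dg f g)) :=
            hard_projL _ _ H
          have H3 : HardAux p f (Dpar p Df f) Df :=
            hardAux_mono (by rintro x ⟨z, hz, rfl⟩; exact hz.1) H2
          exact not_hard_of_computes A hApar hAcomp H3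
        obtain ⟨B, hBpar, hBcomp⟩ := alg_of_not_hard hp1 hnh
        have : Dpar p (corDom Df Dg f g) (corFun f) ≤ Dpar p Df f :=
          Nat.sInf_le ⟨B, hBpar, hBcomp⟩
        exact le_trans this (Nat.le_mul_of_pos_left _ (by norm_num))
      · rw [min_eq_right hle]
        obtain ⟨A, hApar, hAcomp⟩ := Nat.sInf_mem hgne
        have hnh : ¬ HardAux p (corFun f) (Dpar p Dg g) (corDom Df Dg f g) := by
          intro H
          have H2 : HardAux p g (Dpar p Dg g) ((fun z => z ∘ Sum.inr) '' (corDom Df Dg f g)) :=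
            hard_projR _ _ (le_refl _) H
          have H3 : HardAux p g (Dpar p Dg g) Dg :=
            hardAux_mono (by rintro y ⟨z, hz, rfl⟩; exact hz.2.1) H2
          exact not_hard_of_computes A hApar hAcomp H3
        obtain ⟨B, hBpar, hBcomp⟩ := alg_of_not_hard hp1 hnh
        have : Dpar p (corDom Df Dg f g) (corFun f) ≤ Dpar p Dg g :=
          Nat.sInf_le ⟨B, hBpar, hBcomp⟩
        exact le_trans this (Nat.le_mul_of_pos_left _ (by norm_num))
    · -- lower bound
      obtain ⟨B, hBpar, hBcomp⟩ := Nat.sInf_mem hcne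
      rcases cor_lower_core B hBpar hBcomp with h | h
      · obtain ⟨A, hApar, hAcomp⟩ := alg_of_not_hard hp1 h
        exact le_trans (min_le_left _ _) (Nat.sInf_le ⟨A, hApar, hAcomp⟩)
      · obtain ⟨A, hApar, hAcomp⟩ := alg_of_not_hard hp1 h
        exact le_trans (min_le_right _ _) (Nat.sInf_le ⟨A, hApar, hAcomp⟩)
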